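/- Let φ be a unit vector in ℂ⁴. Then there exist 2×2 unitary matrices K₁, K₂ and W₁ such that (K₁ ⊗ K₂)·cz·(I ⊗ W₁)·φ = |00⟩, where I is the 2×2 identity matrix. In other words, every 2-qubit state can be prepared using local gates and at most one controlled-Z gate. -/

import Mathlib

open Matrix Complex
open scoped ComplexConjugate

noncomputable section

/-- bit of qubit 1 (leftmost) in the index `2a+b`. -/
def bitHi (i : Fin 4) : Fin 2 := ⟨i.val / 2, by have := i.isLt; omega⟩
/-- bit of qubit 0 (rightmost). -/
def bitLo (i : Fin 4) : Fin 2 := ⟨i.val % 2, by omega⟩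

/-- Kronecker product `U ⊗ V` acting on `ℂ⁴`, with `|ab⟩` at index `2a+b`. -/
def kron2 (U V : Matrix (Fin 2) (Fin 2) ℂ) : Matrix (Fin 4) (Fin 4) ℂ :=
  fun i j => U (bitHi i) (bitHi j) * V (bitLo i) (bitLo j)

/-- The controlled-Z gate on two qubits. -/
def czGate : Matrix (Fin 4) (Fin 4) ℂ := diagonal ![1, 1, 1, -1]

/-- The matrix `T(φ)` of a 2-qubit state vector. -/
def Tmat (φ : Fin 4 → ℂ) : Matrix (Fin 2) (Fin 2) ℂ := !![φ 0, φ 1; φ 2, φ 3]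

/-- The basis state `|00⟩` in `ℂ⁴`. -/
def e00 : Fin 4 → ℂ := ![1, 0, 0, 0]

lemma bitHi0 : bitHi 0 = 0 := rfl
lemma bitHi1 : bitHi 1 = 0 := rfl
lemma bitHi2 : bitHi 2 = 1 := rfl
lemma bitHi3 : bitHi 3 = 1 := rfl
lemma bitLo0 : bitLo 0 = 0 := rfl
lemma bitLo1 : bitLo 1 = 1 := rfl
lemma bitLo2 : bitLo 2 = 0 := rfl
lemma bitLo3 : bitLo 3 = 1 := rfl

def Kmat (u : Fin 2 → ℂ) : Matrix (Fin 2) (Fin 2) ℂ := !![conj (u 0), conj (u 1); -u 1, u 0]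

lemma Kmat_unitary (u : Fin 2 → ℂ) (hu : u 0 * conj (u 0) + u 1 * conj (u 1) = 1) :
    Kmat u ∈ Matrix.unitaryGroup (Fin 2) ℂ := by
  rw [Matrix.mem_unitaryGroup_iff]
  ext i j
  fin_cases i <;> fin_cases j <;>
    simp [Kmat, Matrix.mul_apply, Fin.sum_univ_two, Matrix.one_apply] <;>
    first | linear_combination hu | linear_combination -hu | ring

lemma Kmat_mulVec (u : Fin 2 → ℂ) (hu : u 0 * conj (u 0) + u 1 * conj (u 1) = 1) :
    (Kmat u).mulVec u = ![1, 0] := by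
  funext i
  fin_cases i <;>
    simp [Kmat, Matrix.mulVec, dotProduct, Fin.sum_univ_two] <;>
    first | linear_combination hu | linear_combination -hu | ring

lemma kron2_mulVec_outer (U V : Matrix (Fin 2) (Fin 2) ℂ) (u w : Fin 2 → ℂ) :
    (kron2 U V).mulVec (fun i => u (bitHi i) * w (bitLo i)) =
      fun i => (U.mulVec u) (bitHi i) * (V.mulVec w) (bitLo i) := by
  funext i
  fin_cases i <;>
    simp [kron2, Matrix.mulVec, dotProduct, Fin.sum_univ_four, Fin.sum_univ_two,
      bitHi0, bitHi1, bitHi2, bitHi3, bitLo0, bitLo1, bitLo2, bitLo3] <;> ring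

lemma kron2_one_mulVec (W : Matrix (Fin 2) (Fin 2) ℂ) (φ : Fin 4 → ℂ) :
    (kron2 1 W).mulVec φ =
      ![W 0 0 * φ 0 + W 0 1 * φ 1, W 1 0 * φ 0 + W 1 1 * φ 1,
        W 0 0 * φ 2 + W 0 1 * φ 3, W 1 0 * φ 2 + W 1 1 * φ 3] := by
  funext i
  fin_cases i <;>
    simp [kron2, Matrix.mulVec, dotProduct, Fin.sum_univ_four, Matrix.one_apply,
      bitHi0, bitHi1, bitHi2, bitHi3, bitLo0, bitLo1, bitLo2, bitLo3] <;> ring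

lemma cz_mulVec (ψ : Fin 4 → ℂ) : czGate.mulVec ψ = ![ψ 0, ψ 1, ψ 2, -ψ 3] := by
  funext i
  fin_cases i <;>
    simp [czGate, Matrix.mulVec, dotProduct, Fin.sum_univ_four, Matrix.diagonal]


lemma outer_exists (n0 n1 n2 n3 : ℂ)
    (hdet : n0 * n3 = n1 * n2)
    (hnorm : n0 * conj n0 + n1 * conj n1 + n2 * conj n2 + n3 * conj n3 = 1) :
    ∃ u w : Fin 2 → ℂ,
      (u 0 * conj (u 0) + u 1 * conj (u 1) = 1) ∧
      (w 0 * conj (w 0) + w 1 * conj (w 1) = 1) ∧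
      n0 = u 0 * w 0 ∧ n1 = u 0 * w 1 ∧ n2 = u 1 * w 0 ∧ n3 = u 1 * w 1 := by
  by_cases h0 : n0 = 0 ∧ n1 = 0
  · obtain ⟨h00, h01⟩ := h0
    refine ⟨![0, 1], ![n2, n3], by simp, ?_, by simp [h00], by simp [h01], by simp, by simp⟩
    simpa [h00, h01] using hnorm
  · have hs0 : 0 < Complex.normSq n0 + Complex.normSq n1 := by
      rcases not_and_or.mp h0 with h | h
      · have := Complex.normSq_pos.mpr h
        nlinarith [Complex.normSq_nonneg n1]
      · have := Complex.normSq_pos.mpr h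
        nlinarith [Complex.normSq_nonneg n0]
    set s : ℝ := Real.sqrt (Complex.normSq n0 + Complex.normSq n1) with hs_def
    have hspos : 0 < s := Real.sqrt_pos.mpr hs0
    have hsne : (s : ℂ) ≠ 0 := by exact_mod_cast hspos.ne'
    have hsq : s ^ 2 = Complex.normSq n0 + Complex.normSq n1 := Real.sq_sqrt hs0.le
    have hs2 : (s : ℂ) ^ 2 = n0 * conj n0 + n1 * conj n1 := by
      rw [Complex.mul_conj, Complex.mul_conj, ← Complex.ofReal_add, ← hsq, Complex.ofReal_pow]
    have hsconj : conj (s : ℂ) = (s : ℂ) := Complex.conj_ofReal s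
    have hdetc : conj n0 * conj n3 = conj n1 * conj n2 := by
      have := congrArg conj hdet
      simpa [_root_.map_mul] using this
    refine ⟨![(s : ℂ), (n2 * conj n0 + n3 * conj n1) / s], ![n0 / s, n1 / s], ?_, ?_, ?_, ?_, ?_, ?_⟩
    · simp only [Matrix.cons_val_zero, Matrix.cons_val_one, Matrix.head_cons, map_div₀, hsconj,
        map_add, _root_.map_mul, Complex.conj_conj]
      field_simp
      linear_combination ((s:ℂ)^2 + (n0 * conj n0 + n1 * conj n1) - 1) * hs2 +
        (n0 * conj n0 + n1 * conj n1) * hnorm -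
        (conj n0 * conj n3 - conj n1 * conj n2) * hdet
    · simp only [Matrix.cons_val_zero, Matrix.cons_val_one, Matrix.head_cons, map_div₀, hsconj]
      field_simp
      first | linear_combination hs2 | linear_combination -hs2
    · simp only [Matrix.cons_val_zero, Matrix.cons_val_one, Matrix.head_cons]
      field_simp
    · simp only [Matrix.cons_val_zero, Matrix.cons_val_one, Matrix.head_cons]
      field_simp
    · simp only [Matrix.cons_val_zero, Matrix.cons_val_one, Matrix.head_cons]
      field_simp
      first
        | linear_combination n2 * hs2 - conj n1 * hdet
        | linear_combination n2 * hs2 + conj n1 * hdet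
        | linear_combination -(n2 * hs2) - conj n1 * hdet
        | linear_combination -(n2 * hs2) + conj n1 * hdet
    · simp only [Matrix.cons_val_zero, Matrix.cons_val_one, Matrix.head_cons]
      field_simp
      first
        | linear_combination n3 * hs2 + conj n0 * hdet
        | linear_combination n3 * hs2 - conj n0 * hdet
        | linear_combination -(n3 * hs2) + conj n0 * hdet
        | linear_combination -(n3 * hs2) - conj n0 * hdet

lemma W_exists (p q r : ℂ) :
    ∃ (α : ℝ) (β : ℂ), 0 < α ∧ ((α : ℂ) ^ 2 + β * conj β = 1) ∧
      (2 * (α : ℂ) * β * p + ((α : ℂ) ^ 2 - β * conj β) * r - 2 * (α : ℂ) * conj β * q = 0) := by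
  -- real-linear map ℝ³ → ℂ
  set L : (Fin 3 → ℝ) →ₗ[ℝ] ℂ :=
    (LinearMap.proj 0).smulRight (2 * (p - q)) + (LinearMap.proj 1).smulRight (2 * Complex.I * (p + q))
      + (LinearMap.proj 2).smulRight r with hL
  have hnotinj : ¬ Function.Injective L := by
    intro h
    have := LinearMap.finrank_le_finrank_of_injective h
    simp [Complex.finrank_real_complex] at this
  have hker : ∃ v : Fin 3 → ℝ, v ≠ 0 ∧ L v = 0 := by
    rw [← LinearMap.ker_eq_bot] at hnotinj
    obtain ⟨v, hv, hvne⟩ := Submodule.exists_mem_ne_zero_of_ne_bot hnotinj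
    exact ⟨v, hvne, hv⟩
  obtain ⟨v, hvne, hLv⟩ := hker
  -- fix sign so that third coordinate nonneg
  obtain ⟨w, hwne, hLw, hw2⟩ : ∃ w : Fin 3 → ℝ, w ≠ 0 ∧ L w = 0 ∧ 0 ≤ w 2 := by
    rcases le_or_gt 0 (v 2) with h | h
    · exact ⟨v, hvne, hLv, h⟩
    · exact ⟨-v, neg_ne_zero.mpr hvne, by rw [map_neg, hLv, neg_zero], by simpa using h.le⟩
  set x := w 0; set y := w 1; set t := w 2
  have hkey : (x : ℂ) * (2 * (p - q)) + (y : ℂ) * (2 * Complex.I * (p + q)) + (t : ℂ) * r = 0 := by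
    have := hLv
    have h2 : L w = (x : ℝ) • (2 * (p - q)) + (y : ℝ) • (2 * Complex.I * (p + q)) + (t : ℝ) • r := by
      simp [hL, LinearMap.smulRight_apply]
      rfl
    rw [hLw] at h2
    simpa [Complex.real_smul] using h2.symm
  have hnsq : 0 < 4 * x ^ 2 + 4 * y ^ 2 + t ^ 2 := by
    have hne : x ≠ 0 ∨ y ≠ 0 ∨ t ≠ 0 := by
      by_contra h
      push_neg at h
      obtain ⟨h1, h2, h3⟩ := h
      exact hwne (funext fun i => by fin_cases i <;> simpa [Pi.zero_apply] using by first | exact h1 | exact h2 | exact h3)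
    rcases hne with h | h | h
    · positivity
    · positivity
    · positivity
  obtain ⟨n, hnpos, hn2⟩ : ∃ n : ℝ, 0 < n ∧ n ^ 2 = 4 * x ^ 2 + 4 * y ^ 2 + t ^ 2 :=
    ⟨Real.sqrt _, Real.sqrt_pos.mpr hnsq, Real.sq_sqrt hnsq.le⟩
  have hα0 : 0 < (n + t) / (2 * n) := by
    have : 0 < n + t := by nlinarith
    positivity
  obtain ⟨α, hαpos, hα2⟩ : ∃ a : ℝ, 0 < a ∧ a ^ 2 = (n + t) / (2 * n) :=
    ⟨Real.sqrt _, Real.sqrt_pos.mpr hα0, Real.sq_sqrt hα0.le⟩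
  have hA1 : 2 * n * α ^ 2 = n + t := by
    rw [hα2]; field_simp
  set β : ℂ := (↑(x / (n * α)) : ℂ) + (↑(y / (n * α)) : ℂ) * Complex.I with hβ_def
  clear_value β
  have hG1 : α ^ 4 * n ^ 2 + x ^ 2 + y ^ 2 = α ^ 2 * n ^ 2 := by
    linear_combination (α ^ 2 * n / 2 + (t - n) / 4) * hA1 - (1 / 4) * hn2
  have hG2 : α ^ 4 * n ^ 2 - x ^ 2 - y ^ 2 = α ^ 2 * n * t := by
    linear_combination (α ^ 2 * n / 2 + (n - t) / 4) * hA1 + (1 / 4) * hn2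
  have hββ : β * conj β = (((x / (n * α)) ^ 2 + (y / (n * α)) ^ 2 : ℝ) : ℂ) := by
    rw [hβ_def, Complex.mul_conj, Complex.normSq_add_mul_I]
  have hnne : n ≠ 0 := hnpos.ne'
  have hαne : α ≠ 0 := hαpos.ne'
  have hnC : (n : ℂ) ≠ 0 := by exact_mod_cast hnne
  have hαC : (α : ℂ) ≠ 0 := by exact_mod_cast hαne
  have hrealG1 : α ^ 2 + ((x / (n * α)) ^ 2 + (y / (n * α)) ^ 2) = 1 := by
    field_simp
    first
    | linear_combination hG1
    | linear_combination -hG1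
    | linear_combination n^2 * α^2 * hG1
  have hrealG2 : α ^ 2 - ((x / (n * α)) ^ 2 + (y / (n * α)) ^ 2) = t / n := by
    field_simp
    first
    | linear_combination hG2
    | linear_combination -hG2
    | linear_combination n * hG2
    | linear_combination -(n * hG2)
    | linear_combination α^2 * n * hG2
  have hβconj : conj β = (↑(x / (n * α)) : ℂ) - (↑(y / (n * α)) : ℂ) * Complex.I := by
    simp [hβ_def, map_add, _root_.map_mul, Complex.conj_ofReal, Complex.conj_I]
    ring
  have hAβ : (α : ℂ) * β = (↑(x / n) : ℂ) + (↑(y / n) : ℂ) * Complex.I := by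
    rw [hβ_def]
    push_cast
    field_simp
  have hAβc : (α : ℂ) * conj β = (↑(x / n) : ℂ) - (↑(y / n) : ℂ) * Complex.I := by
    rw [hβconj]
    push_cast
    field_simp
  have hdiffC : (α : ℂ) ^ 2 - β * conj β = ((t / n : ℝ) : ℂ) := by
    rw [hββ]
    exact_mod_cast congrArg (fun z : ℝ => (z : ℂ)) hrealG2
  refine ⟨α, β, hαpos, ?_, ?_⟩
  · rw [hββ]
    exact_mod_cast congrArg (fun z : ℝ => (z : ℂ)) hrealG1
  · rw [hdiffC]
    linear_combination (norm := (push_cast; ring1)) 2 * p * hAβ - 2 * q * hAβc + ((n : ℂ))⁻¹ * hkey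


lemma sum_conj_eq_one (φ : Fin 4 → ℂ) (h : ∑ i, ‖φ i‖ ^ 2 = 1) :
    φ 0 * conj (φ 0) + φ 1 * conj (φ 1) + φ 2 * conj (φ 2) + φ 3 * conj (φ 3) = 1 := by
  have e : ∀ z : ℂ, z * conj z = ((‖z‖ ^ 2 : ℝ) : ℂ) := fun z => by
    rw [Complex.mul_conj]
    norm_cast
    rw [Complex.normSq_eq_norm_sq]
  rw [Fin.sum_univ_four] at h
  rw [e, e, e, e, ← Complex.ofReal_add, ← Complex.ofReal_add, ← Complex.ofReal_add, h]
  norm_num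

lemma Wmat_unitary (α : ℝ) (β : ℂ) (h : (α : ℂ) ^ 2 + β * conj β = 1) :
    !![(α : ℂ), -conj β; β, (α : ℂ)] ∈ Matrix.unitaryGroup (Fin 2) ℂ := by
  rw [Matrix.mem_unitaryGroup_iff]
  ext i j
  fin_cases i <;> fin_cases j <;>
    simp [Matrix.mul_apply, Fin.sum_univ_two, Matrix.one_apply, Complex.conj_ofReal] <;>
    first | linear_combination h | linear_combination -h | ring

/-- every 2-qubit state can be prepared using local gates and at most one
controlled-Z gate: `(K₁ ⊗ K₂)·cz·(I ⊗ W₁)·φ = |00⟩`. -/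
theorem stmt_8 (φ : Fin 4 → ℂ) (hunit : ∑ i, ‖φ i‖ ^ 2 = 1) :
    ∃ K₁ ∈ Matrix.unitaryGroup (Fin 2) ℂ, ∃ K₂ ∈ Matrix.unitaryGroup (Fin 2) ℂ,
      ∃ W₁ ∈ Matrix.unitaryGroup (Fin 2) ℂ,
        (kron2 K₁ K₂ * czGate * kron2 1 W₁).mulVec φ = e00 := by
  have h1 := sum_conj_eq_one φ hunit
  obtain ⟨α, β, hαpos, hW1, hcond⟩ :=
    W_exists (φ 0 * φ 2) (φ 1 * φ 3) (φ 0 * φ 3 + φ 1 * φ 2)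
  have hdet : (φ 0 * (α : ℂ) - φ 1 * conj β) * -(φ 2 * β + φ 3 * (α : ℂ)) =
      (φ 0 * β + φ 1 * (α : ℂ)) * (φ 2 * (α : ℂ) - φ 3 * conj β) := by
    linear_combination -hcond
  have hnorm : (φ 0 * (α : ℂ) - φ 1 * conj β) * conj (φ 0 * (α : ℂ) - φ 1 * conj β) +
      (φ 0 * β + φ 1 * (α : ℂ)) * conj (φ 0 * β + φ 1 * (α : ℂ)) +
      (φ 2 * (α : ℂ) - φ 3 * conj β) * conj (φ 2 * (α : ℂ) - φ 3 * conj β) +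
      (-(φ 2 * β + φ 3 * (α : ℂ))) * conj (-(φ 2 * β + φ 3 * (α : ℂ))) = 1 := by
    simp only [map_sub, map_add, _root_.map_mul, map_neg, Complex.conj_ofReal,
      Complex.conj_conj]
    linear_combination
      (φ 0 * conj (φ 0) + φ 1 * conj (φ 1) + φ 2 * conj (φ 2) + φ 3 * conj (φ 3)) * hW1 + h1
  obtain ⟨u, w, hu, hw, e0, e1, e2, e3⟩ :=
    outer_exists (φ 0 * (α : ℂ) - φ 1 * conj β) (φ 0 * β + φ 1 * (α : ℂ))
      (φ 2 * (α : ℂ) - φ 3 * conj β) (-(φ 2 * β + φ 3 * (α : ℂ))) hdet hnorm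
  refine ⟨Kmat u, Kmat_unitary u hu, Kmat w, Kmat_unitary w hw,
    !![(α : ℂ), -conj β; β, (α : ℂ)], Wmat_unitary α β hW1, ?_⟩
  rw [← Matrix.mulVec_mulVec, ← Matrix.mulVec_mulVec, kron2_one_mulVec, cz_mulVec]
  have hψ : (![(![(α:ℂ) * φ 0 + (-conj β) * φ 1, β * φ 0 + (α:ℂ) * φ 1,
        (α:ℂ) * φ 2 + (-conj β) * φ 3, β * φ 2 + (α:ℂ) * φ 3] : Fin 4 → ℂ) 0,
      (![(α:ℂ) * φ 0 + (-conj β) * φ 1, β * φ 0 + (α:ℂ) * φ 1,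
        (α:ℂ) * φ 2 + (-conj β) * φ 3, β * φ 2 + (α:ℂ) * φ 3] : Fin 4 → ℂ) 1,
      (![(α:ℂ) * φ 0 + (-conj β) * φ 1, β * φ 0 + (α:ℂ) * φ 1,
        (α:ℂ) * φ 2 + (-conj β) * φ 3, β * φ 2 + (α:ℂ) * φ 3] : Fin 4 → ℂ) 2,
      -(![(α:ℂ) * φ 0 + (-conj β) * φ 1, β * φ 0 + (α:ℂ) * φ 1,
        (α:ℂ) * φ 2 + (-conj β) * φ 3, β * φ 2 + (α:ℂ) * φ 3] : Fin 4 → ℂ) 3] : Fin 4 → ℂ)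
      = fun i => u (bitHi i) * w (bitLo i) := by
    funext i
    fin_cases i <;>
      simp [bitHi0, bitHi1, bitHi2, bitHi3, bitLo0, bitLo1, bitLo2, bitLo3]
    · linear_combination e0
    · linear_combination e1
    · linear_combination e2
    · linear_combination e3
  have hmatch : (![!![(α:ℂ), -conj β; β, (α:ℂ)] 0 0 * φ 0 + !![(α:ℂ), -conj β; β, (α:ℂ)] 0 1 * φ 1,
      !![(α:ℂ), -conj β; β, (α:ℂ)] 1 0 * φ 0 + !![(α:ℂ), -conj β; β, (α:ℂ)] 1 1 * φ 1,
      !![(α:ℂ), -conj β; β, (α:ℂ)] 0 0 * φ 2 + !![(α:ℂ), -conj β; β, (α:ℂ)] 0 1 * φ 3,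
      !![(α:ℂ), -conj β; β, (α:ℂ)] 1 0 * φ 2 + !![(α:ℂ), -conj β; β, (α:ℂ)] 1 1 * φ 3] : Fin 4 → ℂ)
      = ![(α:ℂ) * φ 0 + (-conj β) * φ 1, β * φ 0 + (α:ℂ) * φ 1,
        (α:ℂ) * φ 2 + (-conj β) * φ 3, β * φ 2 + (α:ℂ) * φ 3] := by
    funext i; fin_cases i <;> simp
  rw [hmatch, hψ, kron2_mulVec_outer, Kmat_mulVec u hu, Kmat_mulVec w hw]
  funext i
  fin_cases i <;>
    simp [e00, bitHi0, bitHi1, bitHi2, bitHi3, bitLo0, bitLo1, bitLo2, bitLo3]
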